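/- In a market with N workers, K ≥ N jobs, strict preferences on both sides, the worker-optimal stable matching (produced by worker-proposing deferred acceptance) matches every worker, and each worker is matched to a job among her top N most-preferred jobs. -/

import Mathlib

/-- A matching `μ` (workers to jobs, possibly unmatched) is stable w.r.t.
strict preferences encoded by rank functions `wr` (worker `w` prefers job `a`
to `b` iff `wr w a < wr w b`) and `jr` (job `a` prefers worker `w` to `w'` iff
`jr a w < jr a w'`): there is no blocking pair `(w, a)` where `w` prefers `a`
to her assignment (or is unmatched) and `a` prefers `w` to its assigned worker
(or is unmatched). -/
def RankStable {N K : ℕ} (wr : Fin N → Fin K → ℕ) (jr : Fin K → Fin N → ℕ)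
    (μ : Fin N → Option (Fin K)) : Prop :=
  ¬ ∃ (w : Fin N) (a : Fin K),
      (μ w = none ∨ ∃ b, μ w = some b ∧ wr w a < wr w b) ∧
      (∀ w', μ w' = some a → jr a w < jr a w')

/-- In a market with `N` workers, `K ≥ N` jobs and strict preferences on both
sides, the worker-optimal stable matching matches every worker, and each
worker's assigned job is among her `N` most-preferred jobs (fewer than `N`
jobs are strictly preferred to it). -/
theorem stmt_8 {N K : ℕ} (hNK : N ≤ K)
    (wr : Fin N → Fin K → ℕ) (jr : Fin K → Fin N → ℕ)
    (hwr : ∀ w, Function.Injective (wr w))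
    (hjr : ∀ a, Function.Injective (jr a))
    (μstar : Fin N → Option (Fin K))
    (hmatch : ∀ w w' a, μstar w = some a → μstar w' = some a → w = w')
    (hstable : RankStable wr jr μstar)
    (hopt : ∀ μ : Fin N → Option (Fin K),
      (∀ w w' a, μ w = some a → μ w' = some a → w = w') →
      RankStable wr jr μ →
      ∀ w b, μ w = some b → ∃ b', μstar w = some b' ∧ wr w b' ≤ wr w b) :
    ∀ w : Fin N, ∃ a, μstar w = some a ∧
      (Finset.univ.filter (fun b => wr w b < wr w a)).card < N := by
  classical
  intro w
  have hN : 0 < N := w.pos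
  -- the choice function: pick a worker matched to b, if any
  set f : Fin K → Fin N := fun b =>
    if hb : ∃ w', μstar w' = some b then hb.choose else w with hf
  have hfspec : ∀ b : Fin K, (∃ w', μstar w' = some b) → μstar (f b) = some b := by
    intro b hb
    simp only [hf, dif_pos hb]
    exact hb.choose_spec
  -- every worker is matched
  have hm : ∃ a, μstar w = some a := by
    rcases h : μstar w with _ | a
    · exfalso
      by_cases hall : ∀ b : Fin K, ∃ w', μstar w' = some b
      · have hle : (Finset.univ : Finset (Fin K)).card ≤ (Finset.univ.erase w).card := by
          apply Finset.card_le_card_of_injOn f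
          · intro b _
            have hb := hfspec b (hall b)
            simp only [Finset.mem_coe, Finset.mem_erase, Finset.mem_univ, and_true]
            intro he; rw [he, h] at hb; exact Option.some_ne_none _ hb.symm
          · intro b1 _ b2 _ he
            have h1 := hfspec b1 (hall b1)
            have h2 := hfspec b2 (hall b2)
            rw [he, h2] at h1
            exact Option.some_injective _ h1.symm
        rw [Finset.card_univ, Finset.card_erase_of_mem (Finset.mem_univ w),
          Finset.card_univ, Fintype.card_fin, Fintype.card_fin] at hle
        omega
      · push_neg at hall
        obtain ⟨a, ha⟩ := hall
        exact hstable ⟨w, a, Or.inl h, fun w' hw' => absurd hw' (ha w')⟩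
    · exact ⟨a, rfl⟩
  obtain ⟨a, ha⟩ := hm
  refine ⟨a, ha, ?_⟩
  by_contra hc
  push_neg at hc
  set S := Finset.univ.filter (fun b => wr w b < wr w a) with hS
  by_cases hall : ∀ b ∈ S, ∃ w', μstar w' = some b
  · have hle : S.card ≤ (Finset.univ.erase w).card := by
      apply Finset.card_le_card_of_injOn f
      · intro b hbS
        have hb := hfspec b (hall b hbS)
        simp only [Finset.mem_coe, Finset.mem_erase, Finset.mem_univ, and_true]
        intro he
        rw [he, ha] at hb
        have : a = b := Option.some_injective _ hb
        have hlt : wr w b < wr w a := by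
          simpa [hS] using hbS
        rw [this] at hlt
        exact lt_irrefl _ hlt
      · intro b1 hb1 b2 hb2 he
        have h1 := hfspec b1 (hall b1 hb1)
        have h2 := hfspec b2 (hall b2 hb2)
        rw [he, h2] at h1
        exact Option.some_injective _ h1.symm
    rw [Finset.card_erase_of_mem (Finset.mem_univ w), Finset.card_univ,
      Fintype.card_fin] at hle
    omega
  · push_neg at hall
    obtain ⟨b, hbS, hb⟩ := hall
    apply hstable
    refine ⟨w, b, Or.inr ⟨a, ha, ?_⟩, fun w' hw' => absurd hw' (hb w')⟩
    simpa [hS] using hbS
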